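/- Let r ≥ 1 be such that 2^r ≥ d. Then the minimal sphere covering number of ℝ^d with the ℓ^r-norm is at most 2d: the 2d points ±e_1, …, ±e_d (where e_i is the i-th standard basis vector) lie on the ℓ^r-unit sphere and the ℓ^r-unit sphere is covered by the 2d closed ℓ^r-unit balls centered at these points. -/

import Mathlib

open scoped BigOperators

/-- The `ℓ^r`-norm on `ℝ^d`: `‖x‖_r = (∑ i, |x i| ^ r) ^ (1/r)`. -/
noncomputable def lrNorm (d : ℕ) (r : ℝ) (x : Fin d → ℝ) : ℝ :=
  (∑ i, |x i| ^ r) ^ (1 / r)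

/-- The minimal sphere covering number of `ℝ^d` for the norm `nrm`. -/
noncomputable def coverNum (d : ℕ) (nrm : (Fin d → ℝ) → ℝ) : ℕ :=
  sInf {k | ∃ a : Fin k → Fin d → ℝ, (∀ i, nrm (a i) = 1) ∧
    ∀ x, nrm x = 1 → ∃ i, nrm (x - a i) ≤ 1}

lemma aux_e_norm (d : ℕ) (r : ℝ) (hr : 1 ≤ r) (i : Fin d) (b : Bool) :
    lrNorm d r (fun j => if j = i then (if b then 1 else (-1:ℝ)) else 0) = 1 := by
  have hr0 : r ≠ 0 := by positivity
  unfold lrNorm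
  have : ∀ j : Fin d, |if j = i then (if b then 1 else (-1:ℝ)) else 0| ^ r
      = if j = i then 1 else 0 := by
    intro j
    by_cases h : j = i <;> simp [h, hr0] <;> cases b <;>
      simp [Real.one_rpow, abs_neg]
  rw [Finset.sum_congr rfl fun j _ => this j]
  simp [Finset.sum_ite_eq', Real.one_rpow]

lemma aux_cover (d : ℕ) (hd : 1 ≤ d) (r : ℝ) (hr : 1 ≤ r) (h2r : (d : ℝ) ≤ 2 ^ r)
    (x : Fin d → ℝ) (hx : lrNorm d r x = 1) :
    ∃ i : Fin d, ∃ b : Bool,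
      lrNorm d r (x - fun j => if j = i then (if b then 1 else (-1:ℝ)) else 0) ≤ 1 := by
  have hr0 : (0:ℝ) < r := lt_of_lt_of_le one_pos hr
  have hrne : r ≠ 0 := ne_of_gt hr0
  simp only [lrNorm] at hx
  have hsum_nonneg : (0:ℝ) ≤ ∑ j, |x j| ^ r :=
    Finset.sum_nonneg fun j _ => Real.rpow_nonneg (abs_nonneg _) r
  have hsum : ∑ j, |x j| ^ r = 1 := by
    have h1 := congrArg (· ^ r) hx
    simp only [Real.one_rpow] at h1
    rwa [← Real.rpow_mul hsum_nonneg, one_div, inv_mul_cancel₀ hrne, Real.rpow_one] at h1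
  -- choose max coordinate
  obtain ⟨i, -, hi⟩ := Finset.exists_max_image Finset.univ (fun j => |x j|)
    ⟨⟨0, hd⟩, Finset.mem_univ _⟩
  set t := |x i| with ht
  have ht0 : 0 ≤ t := abs_nonneg _
  have htr : 1 ≤ (d:ℝ) * t ^ r := by
    calc (1:ℝ) = ∑ j, |x j| ^ r := hsum.symm
    _ ≤ ∑ _j : Fin d, t ^ r := by
        apply Finset.sum_le_sum
        intro j _
        exact Real.rpow_le_rpow (abs_nonneg _) (hi j (Finset.mem_univ _)) (le_of_lt hr0)
    _ = (d:ℝ) * t ^ r := by simp [Finset.sum_const, nsmul_eq_mul]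
  have hd0 : (0:ℝ) < d := by exact_mod_cast hd
  have h2pos : (0:ℝ) < 2 ^ r := Real.rpow_pos_of_pos two_pos r
  have hthalf : (1:ℝ)/2 ≤ t := by
    by_contra hc
    push_neg at hc
    have h1 : t ^ r < ((1:ℝ)/2) ^ r := Real.rpow_lt_rpow ht0 hc hr0
    have h2 : ((1:ℝ)/2) ^ r = 1 / 2 ^ r := by
      rw [Real.div_rpow (by norm_num) (by norm_num), Real.one_rpow]
    have : (d:ℝ) * t ^ r < (d:ℝ) * (1 / 2 ^ r) := by
      apply mul_lt_mul_of_pos_left _ hd0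
      rw [← h2]; exact h1
    have hle : (d:ℝ) * (1 / 2 ^ r) ≤ 1 := by
      rw [mul_one_div, div_le_one h2pos]; exact h2r
    linarith
  have ht1 : t ≤ 1 := by
    by_contra hc
    push_neg at hc
    have h1 : (1:ℝ) ^ r < t ^ r := Real.rpow_lt_rpow (by norm_num) hc hr0
    rw [Real.one_rpow] at h1
    have h2 : t ^ r ≤ ∑ j, |x j| ^ r :=
      Finset.single_le_sum (fun j _ => Real.rpow_nonneg (abs_nonneg _) r) (Finset.mem_univ i)
    rw [hsum] at h2
    linarith
  -- choose sign
  refine ⟨i, decide (0 ≤ x i), ?_⟩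
  set b := decide (0 ≤ x i) with hb
  set y : Fin d → ℝ := x - fun j => if j = i then (if b then 1 else (-1:ℝ)) else 0 with hy
  have hyi : |y i| = 1 - t := by
    by_cases h : 0 ≤ x i
    · have hbt : b = true := by simp [hb, h]
      have hv : y i = x i - 1 := by simp [hy, hbt]
      have hx1 : x i ≤ 1 := by
        have h1 := ht1; rw [ht, abs_of_nonneg h] at h1; exact h1
      rw [hv, abs_of_nonpos (by linarith), ht, abs_of_nonneg h]; ring
    · push_neg at h
      have hbf : b = false := by simp [hb, not_le.mpr h]
      have hv : y i = x i + 1 := by simp [hy, hbf]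
      have hx1 : -1 ≤ x i := by
        have h1 := ht1; rw [ht, abs_of_neg h] at h1; linarith
      rw [hv, abs_of_nonneg (by linarith), ht, abs_of_neg h]; ring
  have hyj : ∀ j, j ≠ i → |y j| = |x j| := by
    intro j hj
    simp [hy, hj]
  have hsum2 : ∑ j, |y j| ^ r = (1 - t ^ r) + (1 - t) ^ r := by
    rw [← Finset.add_sum_erase _ _ (Finset.mem_univ i), hyi]
    have : ∑ j ∈ Finset.univ.erase i, |y j| ^ r = ∑ j ∈ Finset.univ.erase i, |x j| ^ r := by
      apply Finset.sum_congr rfl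
      intro j hj
      rw [hyj j (Finset.ne_of_mem_erase hj)]
    rw [this]
    have h3 : ∑ j ∈ Finset.univ.erase i, |x j| ^ r = 1 - t ^ r := by
      have h4 := Finset.add_sum_erase Finset.univ (fun j => |x j| ^ r) (Finset.mem_univ i)
      rw [hsum, ← ht] at h4
      linarith
    rw [h3]; ring
  have hle : (1 - t) ^ r ≤ t ^ r :=
    Real.rpow_le_rpow (by linarith) (by linarith) (le_of_lt hr0)
  have hfin : ∑ j, |y j| ^ r ≤ 1 := by rw [hsum2]; linarith
  simp only [lrNorm]
  calc (∑ j, |y j| ^ r) ^ (1/r) ≤ (1:ℝ) ^ (1/r) := by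
        apply Real.rpow_le_rpow _ hfin (by positivity)
        exact Finset.sum_nonneg fun j _ => Real.rpow_nonneg (abs_nonneg _) r
    _ = 1 := Real.one_rpow _


theorem stmt5 (d : ℕ) (hd : 1 ≤ d) (r : ℝ) (hr : 1 ≤ r) (h2r : (d : ℝ) ≤ 2 ^ r) :
    let e : Fin d → Bool → Fin d → ℝ :=
      fun i b j => if j = i then (if b then 1 else -1) else 0
    (∀ i b, lrNorm d r (e i b) = 1) ∧
    (∀ x : Fin d → ℝ, lrNorm d r x = 1 → ∃ i b, lrNorm d r (x - e i b) ≤ 1) ∧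
    coverNum d (lrNorm d r) ≤ 2 * d := by
  intro e
  refine ⟨fun i b => aux_e_norm d r hr i b, fun x hx => aux_cover d hd r hr h2r x hx, ?_⟩
  apply Nat.sInf_le
  refine ⟨fun k => if h : (k:ℕ) < d then e ⟨k, h⟩ true else
    e ⟨(k:ℕ) - d, by omega⟩ false, ?_, ?_⟩
  · intro k
    by_cases h : (k:ℕ) < d <;> simp only [h, dif_pos, dif_neg, not_false_iff] <;>
      exact aux_e_norm d r hr _ _
  · intro x hx
    obtain ⟨i, b, hib⟩ := aux_cover d hd r hr h2r x hx
    cases b with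
    | true =>
      refine ⟨⟨i, by omega⟩, ?_⟩
      simpa [i.isLt, e] using hib
    | false =>
      refine ⟨⟨d + i, by omega⟩, ?_⟩
      have : ¬ (d + (i:ℕ) < d) := by omega
      simp only [this, dif_neg, not_false_iff]
      have h2 : d + (i:ℕ) - d = (i:ℕ) := by omega
      simpa [h2, e] using hib
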